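/- Let p be an odd prime, and fix integers t ≥ 2. Let G ≤ (ℤ/p^tℤ)ˣ × (ℤ/mℤ)ˣ be the cyclic subgroup generated by (1+p^k, γ), where 1 ≤ k < t, γ has order a power of p dividing p^{t−k}, and G acts on ℤ/p^tℤ via its first coordinate (multiplication). Then projection to the first coordinate gives an isomorphism G ≅ Ω_p^{k,t} = ker((ℤ/p^tℤ)ˣ → (ℤ/p^kℤ)ˣ), and hence H¹(G, ℤ/p^tℤ) = 0. -/

import Mathlib

lemma helper_val (p : ℕ) (hp : p.Prime) (hodd : Odd p) (k j : ℕ) (hk : 1 ≤ k) :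
    ∃ v : ℤ, (1 + (p:ℤ) ^ k) ^ (p ^ j) - 1 = (p:ℤ) ^ (k + j) * v ∧ ¬ (p:ℤ) ∣ v := by
  have hxy : (p:ℤ) ∣ (1 + (p:ℤ)^k) - 1 := by
    simpa using dvd_pow_self (p:ℤ) (Nat.one_le_iff_ne_zero.mp hk)
  have hx : ¬ (p:ℤ) ∣ (1 + (p:ℤ)^k) := by
    intro h
    have : (p:ℤ) ∣ 1 := (dvd_add_right (dvd_pow_self (p:ℤ) (Nat.one_le_iff_ne_zero.mp hk))).mp (by rwa [add_comm] at h)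
    exact hp.one_lt.ne' (by exact_mod_cast Int.isUnit_iff.mp (isUnit_of_dvd_one this) |>.elim (fun h => by omega) (fun h => by omega))
  have hP : Prime (p:ℤ) := Nat.prime_iff_prime_int.mp hp
  have hlte := Int.emultiplicity_pow_sub_pow hp hodd hxy hx (p ^ j)
  rw [one_pow] at hlte
  have h1 : emultiplicity (p:ℤ) ((1 + (p:ℤ)^k) - 1) = (k : ℕ∞) := by
    rw [add_sub_cancel_left]
    exact emultiplicity_pow_self_of_prime hP k
  have h2 : emultiplicity p (p ^ j) = (j : ℕ∞) :=
    emultiplicity_pow_self_of_prime hp.prime j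
  rw [h1, h2] at hlte
  have hfin : emultiplicity (p:ℤ) ((1 + (p:ℤ)^k) ^ (p^j) - 1) = ((k + j : ℕ) : ℕ∞) := by
    rw [hlte]; push_cast; ring
  obtain ⟨hdvd, hndvd⟩ := emultiplicity_eq_coe.mp hfin
  obtain ⟨v, hv⟩ := hdvd
  refine ⟨v, hv, fun hpv => hndvd ?_⟩
  rw [hv, pow_succ]
  exact mul_dvd_mul_left _ hpv

/-- Let `p` be an odd prime, `t ≥ 2`, `1 ≤ k < t`, `m` coprime to `p`, and let
`G ≤ (ℤ/p^tℤ)ˣ × (ℤ/mℤ)ˣ` be the cyclic subgroup generated by `(1+p^k, γ)`, where `γ` has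
order a power of `p` dividing `p^(t−k)`. Then projection to the first coordinate gives an
isomorphism `G ≅ Ω_p^{k,t} = ker((ℤ/p^tℤ)ˣ → (ℤ/p^kℤ)ˣ)`, and hence, for the action of `G`
on `ℤ/p^tℤ` by multiplication by the first coordinate, `H¹(G, ℤ/p^tℤ) = 0` (every 1-cocycle
is a 1-coboundary). -/
theorem stmt_19 (p m : ℕ) (hp : p.Prime) (hodd : Odd p) (hm : Nat.Coprime m p)
    (t k : ℕ) (ht : 2 ≤ t) (hk : 1 ≤ k) (hkt : k < t)
    (u : (ZMod (p ^ t))ˣ) (hu : (u : ZMod (p ^ t)) = 1 + (p : ZMod (p ^ t)) ^ k)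
    (γ : (ZMod m)ˣ) (hγ : ∃ s : ℕ, orderOf γ = p ^ s) (hγd : orderOf γ ∣ p ^ (t - k))
    (G : Subgroup ((ZMod (p ^ t))ˣ × (ZMod m)ˣ)) (hG : G = Subgroup.zpowers (u, γ)) :
    (Function.Injective fun g : G =>
      (MonoidHom.fst (ZMod (p ^ t))ˣ (ZMod m)ˣ) (g : (ZMod (p ^ t))ˣ × (ZMod m)ˣ)) ∧
    Subgroup.map (MonoidHom.fst (ZMod (p ^ t))ˣ (ZMod m)ˣ) G
      = (ZMod.unitsMap (pow_dvd_pow p hkt.le)).ker ∧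
    (∀ f : G → ZMod (p ^ t),
      (∀ a b : G, f (a * b)
          = ((a : (ZMod (p ^ t))ˣ × (ZMod m)ˣ).1 : ZMod (p ^ t)) * f b + f a) →
      ∃ x : ZMod (p ^ t), ∀ a : G,
        f a = ((a : (ZMod (p ^ t))ˣ × (ZMod m)ˣ).1 : ZMod (p ^ t)) * x - x) := by
  have hp0 : p ≠ 0 := hp.ne_zero
  haveI : NeZero (p ^ t) := ⟨pow_ne_zero _ hp0⟩
  haveI : NeZero (p ^ k) := ⟨pow_ne_zero _ hp0⟩
  have hm0 : m ≠ 0 := by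
    intro h; subst h
    exact hp.one_lt.ne' ((Nat.coprime_zero_left p).mp hm)
  haveI : NeZero m := ⟨hm0⟩
  -- u as integer cast
  have huZ : (u : ZMod (p ^ t)) = ((1 + (p:ℤ)^k : ℤ) : ZMod (p ^ t)) := by
    rw [hu]; push_cast; ring
  have hu_pow : ∀ n : ℕ, ((u : ZMod (p ^ t)))^n
      = (((1 + (p:ℤ)^k)^n : ℤ) : ZMod (p ^ t)) := by
    intro n; rw [huZ]; push_cast; ring
  -- p^t = 0 in ZMod p^t
  have hpt0 : (((p:ℤ)^t : ℤ) : ZMod (p ^ t)) = 0 := by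
    have : ((p^t : ℕ) : ZMod (p ^ t)) = 0 := ZMod.natCast_self _
    push_cast at this ⊢
    exact this
  -- u ^ (p^(t-k)) = 1
  have hN1 : u ^ (p ^ (t - k)) = 1 := by
    obtain ⟨v, hv, -⟩ := helper_val p hp hodd k (t - k) hk
    rw [show k + (t - k) = t by omega] at hv
    ext
    rw [Units.val_pow_eq_pow_val, hu_pow, Units.val_one,
      show ((1 + (p:ℤ)^k)^(p^(t-k))) = 1 + (p:ℤ)^t * v by linarith,
      Int.cast_add, Int.cast_mul, Int.cast_one, hpt0, zero_mul, add_zero]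
  -- u ^ (p^(t-k-1)) ≠ 1
  have hN2 : u ^ (p ^ (t - k - 1)) ≠ 1 := by
    obtain ⟨v, hv, hvnd⟩ := helper_val p hp hodd k (t - k - 1) hk
    rw [show k + (t - k - 1) = t - 1 by omega] at hv
    intro h
    have h1 : (((1 + (p:ℤ)^k)^(p^(t-k-1)) : ℤ) : ZMod (p^t)) = 1 := by
      rw [← hu_pow, ← Units.val_pow_eq_pow_val, h, Units.val_one]
    rw [show ((1 + (p:ℤ)^k)^(p^(t-k-1))) = 1 + (p:ℤ)^(t-1) * v by linarith] at h1
    have h2 : (((p:ℤ)^(t-1) * v : ℤ) : ZMod (p^t)) = 0 := by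
      push_cast at h1 ⊢
      linear_combination h1
    have h3 : ((p^t : ℕ) : ℤ) ∣ (p:ℤ)^(t-1) * v := by
      rwa [ZMod.intCast_zmod_eq_zero_iff_dvd] at h2
    rw [Nat.cast_pow] at h3
    have h4 : (p:ℤ)^(t-1) * (p:ℤ) ∣ (p:ℤ)^(t-1) * v := by
      rwa [← pow_succ, show t - 1 + 1 = t by omega]
    exact hvnd ((mul_dvd_mul_iff_left (pow_ne_zero (t-1) (show (p:ℤ) ≠ 0 by exact_mod_cast hp0))).mp h4)
  -- order of u
  have hord : orderOf u = p ^ (t - k) := by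
    have hdvd : orderOf u ∣ p ^ (t - k) := orderOf_dvd_of_pow_eq_one hN1
    obtain ⟨e, he, hee⟩ := (Nat.dvd_prime_pow hp).mp hdvd
    rcases Nat.lt_or_ge e (t - k) with hlt | hge
    · exact absurd (orderOf_dvd_iff_pow_eq_one.mp (by rw [hee]; exact pow_dvd_pow p (by omega))) hN2
    · rw [hee, Nat.le_antisymm he hge]
  -- injectivity
  have hinj : Function.Injective fun g : G =>
      (MonoidHom.fst (ZMod (p ^ t))ˣ (ZMod m)ˣ) (g : (ZMod (p ^ t))ˣ × (ZMod m)ˣ) := by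
    intro a b hab
    have ha : (a : (ZMod (p ^ t))ˣ × (ZMod m)ˣ) ∈ Subgroup.zpowers (u, γ) := by
      rw [← hG]; exact a.2
    have hb : (b : (ZMod (p ^ t))ˣ × (ZMod m)ˣ) ∈ Subgroup.zpowers (u, γ) := by
      rw [← hG]; exact b.2
    rw [Subgroup.mem_zpowers_iff] at ha hb
    obtain ⟨n, hn⟩ := ha
    obtain ⟨n', hn'⟩ := hb
    simp only [MonoidHom.coe_fst] at hab
    have hfst : ∀ i : ℤ, ((u, γ) ^ i).1 = u ^ i := fun i => rfl
    have hsnd : ∀ i : ℤ, ((u, γ) ^ i).2 = γ ^ i := fun i => rfl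
    have h1 : u ^ n = u ^ n' := by
      rw [← hfst, ← hfst, hn, hn']; exact hab
    have h2 : u ^ (n - n') = 1 := by
      rw [zpow_sub, h1, mul_inv_cancel]
    have h3 : (orderOf γ : ℤ) ∣ n - n' := by
      refine dvd_trans ?_ (orderOf_dvd_iff_zpow_eq_one.mpr h2)
      exact_mod_cast hγd.trans (dvd_of_eq hord.symm)
    have h4 : γ ^ (n - n') = 1 := orderOf_dvd_iff_zpow_eq_one.mp h3
    have h5 : γ ^ n = γ ^ n' := by
      rwa [zpow_sub, mul_inv_eq_one] at h4
    apply Subtype.ext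
    rw [← hn, ← hn']
    exact Prod.ext (by rw [hfst, hfst, h1]) (by rw [hsnd, hsnd, h5])
  -- kernel
  have huker : u ∈ (ZMod.unitsMap (pow_dvd_pow p hkt.le)).ker := by
    rw [MonoidHom.mem_ker]
    ext
    rw [ZMod.unitsMap]
    show (ZMod.castHom (pow_dvd_pow p hkt.le) (ZMod (p^k))) (u : ZMod (p^t)) = 1
    rw [hu, map_add, map_one, map_pow, map_natCast, ← Nat.cast_pow, ZMod.natCast_self, add_zero]
  have hcardker : Nat.card (ZMod.unitsMap (pow_dvd_pow p hkt.le)).ker = p ^ (t - k) := by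
    have hsurj := ZMod.unitsMap_surjective (pow_dvd_pow p hkt.le)
    have hq := Subgroup.card_eq_card_quotient_mul_card_subgroup
      (ZMod.unitsMap (pow_dvd_pow p hkt.le)).ker
    have he : Nat.card ((ZMod (p^t))ˣ ⧸ (ZMod.unitsMap (pow_dvd_pow p hkt.le)).ker)
        = Nat.card (ZMod (p^k))ˣ :=
      Nat.card_congr (QuotientGroup.quotientKerEquivOfSurjective _ hsurj).toEquiv
    rw [he] at hq
    have h1 : Nat.card (ZMod (p^t))ˣ = p^(t-1)*(p-1) := by
      rw [Nat.card_eq_fintype_card, ZMod.card_units_eq_totient,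
        Nat.totient_prime_pow hp (by omega)]
    have h2 : Nat.card (ZMod (p^k))ˣ = p^(k-1)*(p-1) := by
      rw [Nat.card_eq_fintype_card, ZMod.card_units_eq_totient,
        Nat.totient_prime_pow hp (by omega)]
    rw [h1, h2] at hq
    have hpos : 0 < p^(k-1)*(p-1) := by
      have := hp.two_le
      exact Nat.mul_pos (Nat.pow_pos (by omega)) (by omega)
    apply Nat.eq_of_mul_eq_mul_left hpos
    rw [← hq, mul_comm (p^(k-1)) (p-1), mul_assoc, ← pow_add,
      show k - 1 + (t - k) = t - 1 by omega, mul_comm]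
  have hker : Subgroup.map (MonoidHom.fst (ZMod (p ^ t))ˣ (ZMod m)ˣ) G
      = (ZMod.unitsMap (pow_dvd_pow p hkt.le)).ker := by
    rw [hG, MonoidHom.map_zpowers]
    refine Subgroup.eq_of_le_of_card_ge (Subgroup.zpowers_le.mpr huker) ?_
    rw [hcardker, Nat.card_zpowers]
    show p ^ (t-k) ≤ orderOf ((MonoidHom.fst (ZMod (p ^ t))ˣ (ZMod m)ˣ) (u, γ))
    rw [show (MonoidHom.fst (ZMod (p ^ t))ˣ (ZMod m)ˣ) (u, γ) = u from rfl, hord]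
  refine ⟨hinj, hker, ?_⟩
  intro f hf
  have hgmem : (u, γ) ∈ G := by rw [hG]; exact Subgroup.mem_zpowers _
  set g : G := ⟨(u, γ), hgmem⟩ with hgdef
  have hf1 : f 1 = 0 := by
    have h := hf 1 1
    rw [mul_one] at h
    have h1 : (((1 : G) : (ZMod (p ^ t))ˣ × (ZMod m)ˣ).1 : ZMod (p ^ t)) = 1 := rfl
    rw [h1, one_mul] at h
    exact (left_eq_add.mp h)
  have hfstn : ∀ n : ℕ, (((g ^ n : G) : (ZMod (p ^ t))ˣ × (ZMod m)ˣ).1 : ZMod (p^t))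
      = ((u : ZMod (p^t)))^n := by
    intro n
    show (((u, γ) ^ n).1 : ZMod (p^t)) = _
    rw [show ((u, γ) ^ n).1 = u ^ n from rfl, Units.val_pow_eq_pow_val]
  have hpow : ∀ n : ℕ, f (g ^ n)
      = (∑ i ∈ Finset.range n, ((u : ZMod (p^t)))^i) * f g := by
    intro n
    induction n with
    | zero => simpa using hf1
    | succ n ih =>
      have h := hf (g ^ n) g
      rw [← pow_succ] at h
      rw [h, ih, Finset.sum_range_succ, hfstn]
      ring
  -- g ^ N = 1
  have hγN : γ ^ (p ^ (t - k)) = 1 := orderOf_dvd_iff_pow_eq_one.mp hγd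
  have hgN : g ^ (p ^ (t - k)) = 1 := by
    apply Subtype.ext
    show (u, γ) ^ (p ^ (t - k)) = 1
    exact Prod.ext (by rw [show ((u, γ) ^ (p^(t-k))).1 = u ^ (p^(t-k)) from rfl, hN1]; rfl)
      (by rw [show ((u, γ) ^ (p^(t-k))).2 = γ ^ (p^(t-k)) from rfl, hγN]; rfl)
  -- the geometric sum is p^(t-k) * v with v a unit
  obtain ⟨v, hv, hvnd⟩ := helper_val p hp hodd k (t - k) hk
  rw [show k + (t - k) = t by omega] at hv
  have hS : (∑ i ∈ Finset.range (p^(t-k)), (1 + (p:ℤ)^k)^i) = (p:ℤ)^(t-k) * v := by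
    have hg1 : (∑ i ∈ Finset.range (p^(t-k)), (1 + (p:ℤ)^k)^i) * ((1 + (p:ℤ)^k) - 1)
        = (1 + (p:ℤ)^k)^(p^(t-k)) - 1 := geom_sum_mul _ _
    have hpk : ((p:ℤ)^k) ≠ 0 := pow_ne_zero _ (by exact_mod_cast hp0)
    apply mul_right_cancel₀ hpk
    rw [show (p:ℤ)^(t-k) * v * (p:ℤ)^k = (p:ℤ)^t * v by
      rw [mul_right_comm, ← pow_add, show t - k + k = t by omega]]
    calc (∑ i ∈ Finset.range (p^(t-k)), (1 + (p:ℤ)^k)^i) * (p:ℤ)^k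
        = (∑ i ∈ Finset.range (p^(t-k)), (1 + (p:ℤ)^k)^i) * ((1 + (p:ℤ)^k) - 1) := by ring
      _ = (1 + (p:ℤ)^k)^(p^(t-k)) - 1 := hg1
      _ = (p:ℤ)^t * v := hv
  -- 0 = S * f g in ZMod
  have hSc : (((∑ i ∈ Finset.range (p^(t-k)), (1 + (p:ℤ)^k)^i) : ℤ) : ZMod (p^t))
      = ∑ i ∈ Finset.range (p^(t-k)), ((u : ZMod (p^t)))^i := by
    push_cast [hu]
    norm_cast
  have hzero : ((((p:ℤ)^(t-k) * v : ℤ)) : ZMod (p^t)) * f g = 0 := by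
    have h := hpow (p ^ (t - k))
    rw [hgN, hf1] at h
    rw [← hS, hSc]
    exact h.symm
  -- lift f g to an integer and divide
  have hfg : (((f g).val : ℤ) : ZMod (p^t)) = f g := by
    push_cast
    exact ZMod.natCast_rightInverse (f g)
  have hdvd : ((p^t : ℕ) : ℤ) ∣ (p:ℤ)^(t-k) * v * ((f g).val : ℤ) := by
    rw [← ZMod.intCast_zmod_eq_zero_iff_dvd, Int.cast_mul, hfg]
    exact hzero
  have hpP : Prime (p:ℤ) := Nat.prime_iff_prime_int.mp hp
  have hdvd2 : (p:ℤ)^k ∣ v * ((f g).val : ℤ) := by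
    rw [show ((p^t : ℕ) : ℤ) = (p:ℤ)^(t-k) * (p:ℤ)^k by
        push_cast; rw [← pow_add, show t - k + k = t by omega], mul_assoc] at hdvd
    exact (mul_dvd_mul_iff_left (pow_ne_zero (t-k) (show (p:ℤ) ≠ 0 by exact_mod_cast hp0))).mp hdvd
  have hcop : IsCoprime ((p:ℤ)^k) v :=
    ((hpP.coprime_iff_not_dvd.mpr hvnd).pow_left)
  obtain ⟨w, hw⟩ := hcop.dvd_of_dvd_mul_left hdvd2
  -- define x
  refine ⟨((w : ℤ) : ZMod (p^t)), ?_⟩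
  have hfgx : f g = ((u : ZMod (p^t)) - 1) * ((w : ℤ) : ZMod (p^t)) := by
    rw [← hfg, hw, hu]
    push_cast
    ring
  intro a
  -- a = g ^ n for some n : ℕ
  have hamem : (a : (ZMod (p ^ t))ˣ × (ZMod m)ˣ) ∈ Subgroup.zpowers (u, γ) := by
    rw [← hG]; exact a.2
  obtain ⟨n, hn⟩ := mem_powers_iff_mem_zpowers.mpr hamem
  have hag : g ^ n = a := by
    apply Subtype.ext
    exact hn
  rw [← hag, hpow n, hfgx, hfstn]
  rw [show (∑ i ∈ Finset.range n, ((u:ZMod (p^t)))^i) * (((u:ZMod (p^t)) - 1) * ((w : ℤ) : ZMod (p^t)))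
      = ((∑ i ∈ Finset.range n, ((u:ZMod (p^t)))^i) * ((u:ZMod (p^t)) - 1)) * ((w : ℤ) : ZMod (p^t)) by ring,
    geom_sum_mul]
  ring
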